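/- Let K be a differential field with derivation D and field of constants C, and let A, B be intermediate fields with C ⊆ A ⊆ K and C ⊆ B ⊆ K. Let A∨B denote the subfield of K generated by A ∪ B. Then σ(A∨B) + σ(A ∩ B) ≥ σ(A) + σ(B), where the inequality is in ℕ ∪ {∞}. -/

import Mathlib

open scoped ENat

/-- For an intermediate field `C ⊆ A ⊆ K` of a differential field `K` with constants `C`,
`σ(A) ∈ ℕ∞` is the supremum of the natural numbers `n` for which there are solutions
`(a₁, b₁), …, (aₙ, bₙ) ∈ A` of the exponential differential equation `D y = y·D x`
with `b i ≠ 0` and `a₁, …, aₙ` linearly independent over `ℚ` modulo `C` (i.e. their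
images in the quotient `ℚ`-vector space `K/C` are linearly independent over `ℚ`). -/
noncomputable def sigmaExp {K : Type*} [Field K] [CharZero K] (D : Derivation ℚ K K)
    (A : Subfield K) : ℕ∞ :=
  sSup {N : ℕ∞ | ∃ n : ℕ, N = n ∧ ∃ a b : Fin n → K,
    (∀ i, a i ∈ A) ∧ (∀ i, b i ∈ A) ∧ (∀ i, b i ≠ 0) ∧
    (∀ i, D (b i) = b i * D (a i)) ∧
    LinearIndependent ℚ
      (fun i => (Submodule.Quotient.mk (a i) : K ⧸ LinearMap.ker D.toLinearMap))}

section Aux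

variable {K : Type*} [Field K] [CharZero K] (D : Derivation ℚ K K)

private lemma expSol_zpow {b e : K} (hb : b ≠ 0) (h : D b = b * D e) (z : ℤ) :
    D (b ^ z) = b ^ z * ((z : K) * D e) := by
  rw [Derivation.leibniz_zpow, h]
  rw [smul_eq_mul, zsmul_eq_mul]
  rw [show b ^ (z - 1) * (b * D e) = b ^ (z-1) * b * D e by ring,
    ← zpow_add_one₀ hb, sub_add_cancel]
  ring

private lemma expSol_smul {c e : K} (hc : c ≠ 0) (h : D c = c * D e) (M : ℕ) :
    D (c ^ (M : ℤ)) = c ^ (M : ℤ) * D ((M : K) * e) := by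
  rw [expSol_zpow D hc h (M : ℤ)]
  have : D ((M : K) * e) = (M : K) * D e := by
    have h1 : ((M : K)) * e = ((M : ℚ)) • e := by rw [Rat.smul_def]; norm_cast
    rw [h1, D.map_smul, Rat.smul_def]; norm_cast
  rw [this]; push_cast; ring

private lemma expSol_sum {n : ℕ} (a b : Fin n → K) (hb0 : ∀ i, b i ≠ 0)
    (hD : ∀ i, D (b i) = b i * D (a i)) (z : Fin n → ℤ) :
    D (∏ i, b i ^ z i) = (∏ i, b i ^ z i) * D (∑ i, (z i : K) * a i) := by
  classical
  induction (Finset.univ : Finset (Fin n)) using Finset.induction_on with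
  | empty => simp
  | @insert x s hx ih =>
    rw [Finset.prod_insert hx, Finset.sum_insert hx, Derivation.leibniz, map_add,
      expSol_zpow D (hb0 x) (hD x) (z x)]
    have hDz : D ((z x : K) * a x) = (z x : K) * D (a x) := by
      have : ((z x : K)) * a x = ((z x : ℚ)) • a x := by
        rw [Rat.smul_def]; norm_cast
      rw [this, D.map_smul, Rat.smul_def]; norm_cast
    rw [ih, smul_eq_mul, smul_eq_mul, hDz]
    ring

/-- If two elements solve the exponential equation against the same `e`,
their quotient is a constant. -/
private lemma expSol_div_const {x y e : K} (hy : y ≠ 0)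
    (hx : D x = x * D e) (hy' : D y = y * D e) : D (x / y) = 0 := by
  rw [Derivation.leibniz_div, hx, hy', smul_eq_mul, smul_eq_mul, smul_eq_mul]
  ring

private lemma exists_common_den {n : ℕ} (q : Fin n → ℚ) :
    ∃ N : ℕ, 0 < N ∧ ∃ z : Fin n → ℤ, ∀ i, (z i : ℚ) = (N : ℚ) * q i := by
  classical
  refine ⟨∏ i, (q i).den, Finset.prod_pos fun i _ => (q i).pos,
    fun i => (q i).num * ∏ j ∈ Finset.univ.erase i, ((q j).den : ℤ), fun i => ?_⟩
  push_cast
  rw [← Finset.mul_prod_erase Finset.univ (fun j => ((q j).den : ℚ)) (Finset.mem_univ i)]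
  have : ((q i).den : ℚ) * q i = (q i).num := by
    rw [mul_comm, Rat.mul_den_eq_num]
  push_cast at this ⊢
  rw [mul_comm ((q i).den : ℚ), mul_assoc, this]
  ring

private lemma le_sigmaExp (A : Subfield K) {n : ℕ} (a b : Fin n → K)
    (h1 : ∀ i, a i ∈ A) (h2 : ∀ i, b i ∈ A) (h3 : ∀ i, b i ≠ 0)
    (h4 : ∀ i, D (b i) = b i * D (a i))
    (h5 : LinearIndependent ℚ
      (fun i => (Submodule.Quotient.mk (a i) : K ⧸ LinearMap.ker D.toLinearMap))) :
    (n : ℕ∞) ≤ sigmaExp D A :=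
  le_sSup ⟨n, rfl, a, b, h1, h2, h3, h4, h5⟩

private lemma sigmaExp_set_nonempty (A : Subfield K) :
    {N : ℕ∞ | ∃ n : ℕ, N = n ∧ ∃ a b : Fin n → K,
      (∀ i, a i ∈ A) ∧ (∀ i, b i ∈ A) ∧ (∀ i, b i ≠ 0) ∧
      (∀ i, D (b i) = b i * D (a i)) ∧
      LinearIndependent ℚ
        (fun i => (Submodule.Quotient.mk (a i) : K ⧸ LinearMap.ker D.toLinearMap))}.Nonempty :=
  ⟨0, 0, by simp, fun i => 0, fun i => 1, fun i => i.elim0, fun i => i.elim0,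
    fun i => i.elim0, fun i => i.elim0, linearIndependent_empty_type⟩

/-- Given solutions `(a i, b i)` in `A` and an element `x` of the span of the classes
of the `a i` mod constants, some positive integer multiple of `x` is the class of
an element of `A` solving the exponential equation within `A`. -/
private lemma exists_scaled_rep (A : Subfield K) {n : ℕ} (a b : Fin n → K)
    (haA : ∀ i, a i ∈ A) (hbA : ∀ i, b i ∈ A) (hb0 : ∀ i, b i ≠ 0)
    (hDb : ∀ i, D (b i) = b i * D (a i))
    {x : K ⧸ LinearMap.ker D.toLinearMap}
    (hx : x ∈ Submodule.span ℚ (Set.range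
      (fun i => (Submodule.Quotient.mk (a i) : K ⧸ LinearMap.ker D.toLinearMap)))) :
    ∃ (α c : K) (N : ℕ), 0 < N ∧ α ∈ A ∧ c ∈ A ∧ c ≠ 0 ∧ D c = c * D α ∧
      (Submodule.Quotient.mk α : K ⧸ LinearMap.ker D.toLinearMap) = (N : ℚ) • x := by
  classical
  rw [Submodule.mem_span_range_iff_exists_fun] at hx
  obtain ⟨q, hq⟩ := hx
  obtain ⟨N, hN, z, hz⟩ := exists_common_den q
  refine ⟨∑ i, (z i : K) * a i, ∏ i, b i ^ z i, N, hN, ?_, ?_, ?_, ?_, ?_⟩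
  · exact Subfield.sum_mem A fun i _ => A.mul_mem (A.intCast_mem _) (haA i)
  · exact Subfield.prod_mem A fun i _ => A.zpow_mem (hbA i) _
  · exact Finset.prod_ne_zero_iff.mpr fun i _ => zpow_ne_zero _ (hb0 i)
  · exact expSol_sum D a b hb0 hDb z
  · have : (Submodule.Quotient.mk (∑ i, (z i : K) * a i)
        : K ⧸ LinearMap.ker D.toLinearMap)
        = ∑ i, (z i : ℚ) • (Submodule.Quotient.mk (a i)
          : K ⧸ LinearMap.ker D.toLinearMap) := by
      rw [← Submodule.mkQ_apply, map_sum]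
      refine Finset.sum_congr rfl fun i _ => ?_
      have h1 : (z i : K) * a i = (z i : ℚ) • a i := by rw [Rat.smul_def]; norm_cast
      rw [h1, map_smul, Submodule.mkQ_apply]
    rw [this, ← hq, Finset.smul_sum]
    refine Finset.sum_congr rfl fun i _ => ?_
    rw [hz i, smul_smul]

end Aux

/-- `σ` is supermodular: `σ(A∨B) + σ(A ∩ B) ≥ σ(A) + σ(B)`, where `A∨B` is the subfield
generated by `A ∪ B`. -/
theorem sigmaExp_supermodular {K : Type*} [Field K] [CharZero K] (D : Derivation ℚ K K)
    (A B : Subfield K)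
    (hCA : ∀ c : K, D c = 0 → c ∈ A) (hCB : ∀ c : K, D c = 0 → c ∈ B) :
    sigmaExp D A + sigmaExp D B ≤
      sigmaExp D (Subfield.closure ((A : Set K) ∪ (B : Set K))) + sigmaExp D (A ⊓ B) := by
  classical
  -- reduce to showing the bound for each pair of witnessed naturals
  rw [sigmaExp, sigmaExp, sSup_eq_iSup', sSup_eq_iSup']
  haveI := (sigmaExp_set_nonempty D A).to_subtype
  haveI := (sigmaExp_set_nonempty D B).to_subtype
  refine ENat.iSup_add_iSup_le fun i j => ?_
  obtain ⟨n, hni, a, b, haA, hbA, hb0, hDb, hliA⟩ := i.2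
  obtain ⟨m, hmj, a', b', haB, hbB, hb0', hDb', hliB⟩ := j.2
  rw [show (i : ℕ∞) = n from hni, show (j : ℕ∞) = m from hmj]
  set V := K ⧸ LinearMap.ker D.toLinearMap with hV
  set u : Fin n → V := fun i => Submodule.Quotient.mk (a i) with hu
  set v : Fin m → V := fun i => Submodule.Quotient.mk (a' i) with hv
  set U : Submodule ℚ V := Submodule.span ℚ (Set.range u) with hUdef
  set W : Submodule ℚ V := Submodule.span ℚ (Set.range v) with hWdef
  haveI : FiniteDimensional ℚ U := FiniteDimensional.span_of_finite ℚ (Set.finite_range u)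
  haveI : FiniteDimensional ℚ W := FiniteDimensional.span_of_finite ℚ (Set.finite_range v)
  set k := Module.finrank ℚ ↥(U ⊓ W) with hk
  set d := Module.finrank ℚ ↥(U ⊔ W) with hd
  -- Step 1 : σ(A ⊓ B) ≥ k
  have step1 : (k : ℕ∞) ≤ sigmaExp D (A ⊓ B) := by
    let w : Module.Basis (Fin k) ℚ ↥(U ⊓ W) := Module.finBasis ℚ ↥(U ⊓ W)
    have hrep : ∀ l : Fin k, ∃ (α c : K) (s : ℚ), s ≠ 0 ∧ α ∈ A ⊓ B ∧ c ∈ A ⊓ B ∧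
        c ≠ 0 ∧ D c = c * D α ∧
        (Submodule.Quotient.mk α : V) = s • ((w l : V)) := by
      intro l
      have hxU : (w l : V) ∈ U := (Submodule.mem_inf.mp (w l).2).1
      have hxW : (w l : V) ∈ W := (Submodule.mem_inf.mp (w l).2).2
      obtain ⟨α, c, N, hN, hαA, hcA, hc0, hDc, hπα⟩ :=
        exists_scaled_rep D A a b haA hbA hb0 hDb hxU
      obtain ⟨β, c', M, hM, hβB, hc'B, hc'0, hDc', hπβ⟩ :=
        exists_scaled_rep D B a' b' haB hbB hb0' hDb' hxW
      -- scale both to the common multiple (N*M) • x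
      set α' : K := (M : K) * α with hα'
      set β' : K := (N : K) * β with hβ'
      have hπα' : (Submodule.Quotient.mk α' : V) = ((N * M : ℕ) : ℚ) • (w l : V) := by
        have h1 : α' = ((M : ℚ)) • α := by rw [Rat.smul_def]; norm_cast
        rw [h1, ← Submodule.mkQ_apply, map_smul, Submodule.mkQ_apply, hπα, smul_smul]
        norm_cast
        rw [mul_comm]
      have hπβ' : (Submodule.Quotient.mk β' : V) = ((N * M : ℕ) : ℚ) • (w l : V) := by
        have h1 : β' = ((N : ℚ)) • β := by rw [Rat.smul_def]; norm_cast
        rw [h1, ← Submodule.mkQ_apply, map_smul, Submodule.mkQ_apply, hπβ, smul_smul]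
        norm_cast
      have hker : D (α' - β') = 0 := by
        have : (Submodule.Quotient.mk α' : V) = Submodule.Quotient.mk β' := by
          rw [hπα', hπβ']
        rw [Submodule.Quotient.eq] at this
        simpa using this
      have hDeq : D α' = D β' := sub_eq_zero.mp (by rw [← map_sub]; exact hker)
      -- witnesses
      set γ : K := c ^ (M : ℤ) with hγ
      set δ : K := c' ^ (N : ℤ) with hδ
      have hDγ : D γ = γ * D α' := expSol_smul D hc0 hDc M
      have hDδ : D δ = δ * D β' := expSol_smul D hc'0 hDc' N
      have hγ0 : γ ≠ 0 := zpow_ne_zero _ hc0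
      have hδ0 : δ ≠ 0 := zpow_ne_zero _ hc'0
      have hα'A : α' ∈ A := A.mul_mem (natCast_mem A M) hαA
      have hβ'B : β' ∈ B := B.mul_mem (natCast_mem B N) hβB
      have hα'B : α' ∈ B := by
        have : α' = β' + (α' - β') := by ring
        rw [this]
        exact B.add_mem hβ'B (hCB _ hker)
      have hγA : γ ∈ A := A.zpow_mem hcA _
      have hγB : γ ∈ B := by
        have hq : D (γ / δ) = 0 := expSol_div_const D hδ0 hDγ (by rw [hDδ, hDeq])
        have : γ = (γ / δ) * δ := (div_mul_cancel₀ γ hδ0).symm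
        rw [this]
        exact B.mul_mem (hCB _ hq) (B.zpow_mem hc'B _)
      refine ⟨α', γ, ((N * M : ℕ) : ℚ), ?_, ⟨hα'A, hα'B⟩, ⟨hγA, hγB⟩, hγ0, hDγ, hπα'⟩
      positivity
    choose α c s hs hα hc hc0 hDc hπ using hrep
    have hg : LinearIndependent ℚ (fun l => (w l : V)) :=
      w.linearIndependent.map' (U ⊓ W).subtype (Submodule.ker_subtype _)
    have hsm : LinearIndependent ℚ (fun l => s l • ((w l : V))) := by
      have := hg.units_smul (fun l => Units.mk0 (s l) (hs l))
      convert this using 1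
      funext l
      simp [Units.smul_def]
    have hli : LinearIndependent ℚ (fun l => (Submodule.Quotient.mk (α l) : V)) := by
      have : (fun l => (Submodule.Quotient.mk (α l) : V))
          = fun l => s l • ((w l : V)) := funext fun l => hπ l
      rw [this]; exact hsm
    exact le_sigmaExp D (A ⊓ B) α c hα hc hc0 hDc hli
  -- Step 2 : σ(A ∨ B) ≥ d
  have step2 : (d : ℕ∞) ≤ sigmaExp D (Subfield.closure ((A : Set K) ∪ (B : Set K))) := by
    set ta : Fin n ⊕ Fin m → K := Sum.elim a a' with hta
    set tb : Fin n ⊕ Fin m → K := Sum.elim b b' with htb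
    set f : Fin n ⊕ Fin m → V := fun j => Submodule.Quotient.mk (ta j) with hf
    have hrange : Set.range f = Set.range u ∪ Set.range v := by
      have : f = Sum.elim u v := by
        funext j; cases j <;> rfl
      rw [this, Set.Sum.elim_range]
    have hspanf : Submodule.span ℚ (Set.range f) = U ⊔ W := by
      rw [hrange, Submodule.span_union]
    obtain ⟨sS, hsub, hspan, hliS⟩ := exists_linearIndependent ℚ (Set.range f)
    haveI : Fintype ↥sS := ((Set.finite_range f).subset hsub).fintype
    have hcard : sS.toFinset.card = d := by
      rw [← finrank_span_set_eq_card hliS, hspan, hspanf]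
    have hcard' : Fintype.card ↥sS = d := by rw [← Set.toFinset_card, hcard]
    let e : Fin d ≃ ↥sS := (Fintype.equivFinOfCardEq hcard').symm
    have hmem : ∀ i : Fin d, ∃ j, f j = ((e i : V)) := fun i => hsub (e i).2
    choose J hJ using hmem
    have hliG : LinearIndependent ℚ (fun i : Fin d => ((e i : V))) :=
      hliS.comp e e.injective
    have hliK : LinearIndependent ℚ
        (fun i : Fin d => (Submodule.Quotient.mk (ta (J i)) : V)) := by
      have : (fun i : Fin d => (Submodule.Quotient.mk (ta (J i)) : V))
          = fun i : Fin d => ((e i : V)) := funext fun i => hJ i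
      rw [this]; exact hliG
    have htaM : ∀ j, ta j ∈ Subfield.closure ((A : Set K) ∪ (B : Set K)) := by
      rintro (i | i)
      · exact Subfield.subset_closure (Set.mem_union_left _ (haA i))
      · exact Subfield.subset_closure (Set.mem_union_right _ (haB i))
    have htbM : ∀ j, tb j ∈ Subfield.closure ((A : Set K) ∪ (B : Set K)) := by
      rintro (i | i)
      · exact Subfield.subset_closure (Set.mem_union_left _ (hbA i))
      · exact Subfield.subset_closure (Set.mem_union_right _ (hbB i))
    have htb0 : ∀ j, tb j ≠ 0 := by rintro (i | i) <;> [exact hb0 i; exact hb0' i]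
    have htD : ∀ j, D (tb j) = tb j * D (ta j) := by
      rintro (i | i) <;> [exact hDb i; exact hDb' i]
    exact le_sigmaExp D _ (ta ∘ J) (tb ∘ J) (fun i => htaM (J i)) (fun i => htbM (J i))
      (fun i => htb0 (J i)) (fun i => htD (J i)) hliK
  -- Step 3 : combine
  have hnm : d + k = n + m := by
    have h1 := Submodule.finrank_sup_add_finrank_inf_eq U W
    have h2 : Module.finrank ℚ U = n := by
      rw [hUdef, finrank_span_eq_card hliA, Fintype.card_fin]
    have h3 : Module.finrank ℚ W = m := by
      rw [hWdef, finrank_span_eq_card hliB, Fintype.card_fin]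
    rw [← h2, ← h3]
    exact h1
  calc (n : ℕ∞) + (m : ℕ∞) = ((d + k : ℕ) : ℕ∞) := by rw [hnm]; push_cast; ring
    _ = (d : ℕ∞) + (k : ℕ∞) := by push_cast; ring
    _ ≤ _ := add_le_add step2 step1
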